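/- arXiv:1407.0614 — 3 statements merged into one kernel-verified Lean document; each statement's English description precedes it below -/
import Mathlib

section
/- Let X be a uniquely geodesic metric space whose distance functions are strictly convex along nondegenerate geodesics (e.g., the geodesic metric of a simple polygon). Let A be a nonempty intersection of closed unit balls with centers q₁,…,qₘ, and let e be a geodesic segment with endpoints α and β such that d(α,qᵢ) ≤ 2 for all i. Then there is at most one point p in e \ {α} such that d(p,q) = 2 for q a farthest center from p; that is, if p₁, p₂ ∈ e both lie at distance exactly 2 from their respective farthest centers and neither equals α, then p₁ = p₂. -/
/-- On a geodesic segment `γ : [0,L] → X` with endpoint `α = γ 0` satisfying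
`d(α, qᵢ) ≤ 2` for all centers, there is at most one point of the segment other than
`α` whose distance to its farthest center is exactly `2`: if `γ t₁` and `γ t₂` both
are at distance exactly `2` from their respective farthest centers and `t₁, t₂ ∈ (0,L]`,
then `t₁ = t₂`. -/
theorem at_most_one_point_at_distance_two
    {X : Type*} [MetricSpace X]
    (γ : ℝ → X) (L : ℝ) (hL : 0 < L)
    (hgeo : ∀ s ∈ Set.Icc (0:ℝ) L, ∀ t ∈ Set.Icc (0:ℝ) L, dist (γ s) (γ t) = |s - t|)
    (hstrict : ∀ (a : X) (s t u : ℝ), 0 ≤ s → s < t → t < u → u ≤ L →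
      dist a (γ t) < max (dist a (γ s)) (dist a (γ u)))
    (Q : Finset X)
    (hα : ∀ i ∈ Q, dist (γ 0) i ≤ 2)
    (t₁ t₂ : ℝ) (ht₁ : t₁ ∈ Set.Ioc 0 L) (ht₂ : t₂ ∈ Set.Ioc 0 L)
    (q₁ q₂ : X) (hq₁Q : q₁ ∈ Q) (hq₂Q : q₂ ∈ Q)
    (hq₁far : ∀ i ∈ Q, dist (γ t₁) i ≤ dist (γ t₁) q₁)
    (hq₂far : ∀ i ∈ Q, dist (γ t₂) i ≤ dist (γ t₂) q₂)
    (h₁ : dist (γ t₁) q₁ = 2) (h₂ : dist (γ t₂) q₂ = 2) :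
    t₁ = t₂ := by
  have key : ∀ (s t : ℝ), s ∈ Set.Ioc 0 L → t ∈ Set.Ioc 0 L → s < t →
      ∀ (a b : X), a ∈ Q → b ∈ Q → (∀ i ∈ Q, dist (γ s) i ≤ dist (γ s) a) →
      dist (γ s) a = 2 → dist (γ t) b = 2 → (∀ i ∈ Q, dist (γ t) i ≤ dist (γ t) b) →
      False := by
    intro s t hs ht hst a b haQ hbQ hafar ha hb hbfar
    have h1 : dist a (γ 0) ≤ 2 := by rw [dist_comm]; exact hα a haQ
    have h2 : dist a (γ t) ≤ 2 := by
      rw [dist_comm]; calc dist (γ t) a ≤ dist (γ t) b := hbfar a haQ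
        _ = 2 := hb
    have := hstrict a 0 s t le_rfl hs.1 hst ht.2
    rw [dist_comm a (γ s), ha] at this
    have : (2:ℝ) < 2 := lt_of_lt_of_le this (max_le h1 h2)
    exact lt_irrefl _ this
  rcases lt_trichotomy t₁ t₂ with h | h | h
  · exact absurd (key t₁ t₂ ht₁ ht₂ h q₁ q₂ hq₁Q hq₂Q hq₁far h₁ h₂ hq₂far) (by simp)
  · exact h
  · exact absurd (key t₂ t₁ ht₂ ht₁ h q₂ q₁ hq₂Q hq₁Q hq₂far h₂ h₁ hq₁far) (by simp)
end

section
/- Let i be a point in a uniquely geodesic metric space with strictly convex distance functions, let e be a geodesic segment with endpoint v such that d(i,v) ≤ 1. Then there are at most two points on e at distance exactly 1 from i, and if there are two such points, one of them is v. -/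
/-- For a point `i` with `d(i,v) ≤ 1` and a geodesic segment `γ : [0,L] → X` with
endpoint `v = γ 0`, there are at most two points of the segment at distance exactly `1`
from `i`, and if there are two, one of them is `v`. -/
theorem at_most_two_points_at_distance_one
    {X : Type*} [MetricSpace X]
    (γ : ℝ → X) (L : ℝ) (hL : 0 < L) (i : X)
    (hgeo : ∀ s ∈ Set.Icc (0:ℝ) L, ∀ t ∈ Set.Icc (0:ℝ) L, dist (γ s) (γ t) = |s - t|)
    (hstrict : ∀ (a : X) (s t u : ℝ), 0 ≤ s → s < t → t < u → u ≤ L →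
      dist a (γ t) < max (dist a (γ s)) (dist a (γ u)))
    (hv : dist i (γ 0) ≤ 1)
    (t₁ t₂ : ℝ) (ht₁ : t₁ ∈ Set.Icc 0 L) (ht₂ : t₂ ∈ Set.Icc 0 L)
    (hne : t₁ ≠ t₂)
    (h₁ : dist i (γ t₁) = 1) (h₂ : dist i (γ t₂) = 1) :
    t₁ = 0 ∨ t₂ = 0 := by
  by_contra h
  push_neg at h
  obtain ⟨h1, h2⟩ := h
  have p1 : 0 < t₁ := lt_of_le_of_ne ht₁.1 (Ne.symm h1)
  have p2 : 0 < t₂ := lt_of_le_of_ne ht₂.1 (Ne.symm h2)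
  rcases lt_or_gt_of_ne hne with hlt | hlt
  · have := hstrict i 0 t₁ t₂ le_rfl p1 hlt ht₂.2
    rw [h₁, h₂] at this
    have : (1:ℝ) < 1 := lt_of_lt_of_le this (max_le hv le_rfl)
    exact absurd this (lt_irrefl 1)
  · have := hstrict i 0 t₂ t₁ le_rfl p2 hlt ht₁.2
    rw [h₁, h₂] at this
    have : (1:ℝ) < 1 := lt_of_lt_of_le this (max_le hv le_rfl)
    exact absurd this (lt_irrefl 1)
end

section
/- Let γ be a crossing-free coloring of a circle (or cyclic sequence) using κ > 1 colors, and let Π_γ be the set of blocks (maximal monochromatic arcs) induced by γ. Then |Π_γ| ≤ 2(κ − 1). -/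
open Finset
open Fin.NatCast Fin.CommRing

variable {n : ℕ} [NeZero n]

private lemma vadd (x : Fin n) (k : ℕ) : (x + (k : Fin n)).val = (x.val + k) % n := by
  simp [Fin.val_add, Fin.val_natCast, Nat.add_mod]

private lemma cast_add_cast (x : Fin n) (j k : ℕ) :
    x + (j : Fin n) + (k : Fin n) = x + ((j + k : ℕ) : Fin n) := by
  push_cast; ring

/-- Cyclic crossing-freeness. -/
def CF (γ : Fin n → ℕ) : Prop :=
  ∀ (x : Fin n) (k₁ k₂ k₃ : ℕ), 0 < k₁ → k₁ < k₂ → k₂ < k₃ → k₃ < n →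
    γ x = γ (x + (k₂ : Fin n)) → γ (x + (k₁ : Fin n)) = γ (x + (k₃ : Fin n)) →
    γ x = γ (x + (k₁ : Fin n))

lemma cf_of_hcf {γ : Fin n → ℕ}
    (hcf : ∀ a b c d : Fin n, a < b → b < c → c < d → γ a = γ c → γ b = γ d → γ a = γ b) :
    CF γ := by
  intro x k₁ k₂ k₃ h1 h12 h23 h3n e02 e13
  have hv := x.isLt
  have w1 := vadd x k₁; have w2 := vadd x k₂; have w3 := vadd x k₃
  by_cases a3 : x.val + k₃ < n
  · have m1 : (x.val + k₁) % n = x.val + k₁ := Nat.mod_eq_of_lt (by omega)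
    have m2 : (x.val + k₂) % n = x.val + k₂ := Nat.mod_eq_of_lt (by omega)
    have m3 : (x.val + k₃) % n = x.val + k₃ := Nat.mod_eq_of_lt (by omega)
    exact hcf x (x + (k₁ : Fin n)) (x + (k₂ : Fin n)) (x + (k₃ : Fin n))
      (by rw [Fin.lt_def, w1, m1]; omega)
      (by rw [Fin.lt_def, w1, w2, m1, m2]; omega)
      (by rw [Fin.lt_def, w2, w3, m2, m3]; omega) e02 e13
  · by_cases a2 : x.val + k₂ < n
    · -- only k₃ wraps : order p3 < p0 < p1 < p2
      have m1 : (x.val + k₁) % n = x.val + k₁ := Nat.mod_eq_of_lt (by omega)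
      have m2 : (x.val + k₂) % n = x.val + k₂ := Nat.mod_eq_of_lt (by omega)
      have m3 : (x.val + k₃) % n = x.val + k₃ - n := by
        rw [Nat.mod_eq_sub_mod (by omega)]; exact Nat.mod_eq_of_lt (by omega)
      have h := hcf (x + (k₃ : Fin n)) x (x + (k₁ : Fin n)) (x + (k₂ : Fin n))
        (by rw [Fin.lt_def, w3, m3]; omega)
        (by rw [Fin.lt_def, w1, m1]; omega)
        (by rw [Fin.lt_def, w1, w2, m1, m2]; omega) e13.symm e02
      exact h.symm.trans e13.symm
    · by_cases a1 : x.val + k₁ < n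
      · -- k₂, k₃ wrap : order p2 < p3 < p0 < p1
        have m1 : (x.val + k₁) % n = x.val + k₁ := Nat.mod_eq_of_lt (by omega)
        have m2 : (x.val + k₂) % n = x.val + k₂ - n := by
          rw [Nat.mod_eq_sub_mod (by omega)]; exact Nat.mod_eq_of_lt (by omega)
        have m3 : (x.val + k₃) % n = x.val + k₃ - n := by
          rw [Nat.mod_eq_sub_mod (by omega)]; exact Nat.mod_eq_of_lt (by omega)
        have h := hcf (x + (k₂ : Fin n)) (x + (k₃ : Fin n)) x (x + (k₁ : Fin n))
          (by rw [Fin.lt_def, w2, w3, m2, m3]; omega)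
          (by rw [Fin.lt_def, w3, m3]; omega)
          (by rw [Fin.lt_def, w1, m1]; omega) e02.symm e13.symm
        exact e02.trans (h.trans e13.symm)
      · -- all wrap : order p1 < p2 < p3 < p0
        have m1 : (x.val + k₁) % n = x.val + k₁ - n := by
          rw [Nat.mod_eq_sub_mod (by omega)]; exact Nat.mod_eq_of_lt (by omega)
        have m2 : (x.val + k₂) % n = x.val + k₂ - n := by
          rw [Nat.mod_eq_sub_mod (by omega)]; exact Nat.mod_eq_of_lt (by omega)
        have m3 : (x.val + k₃) % n = x.val + k₃ - n := by
          rw [Nat.mod_eq_sub_mod (by omega)]; exact Nat.mod_eq_of_lt (by omega)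
        have h := hcf (x + (k₁ : Fin n)) (x + (k₂ : Fin n)) (x + (k₃ : Fin n)) x
          (by rw [Fin.lt_def, w1, w2, m1, m2]; omega)
          (by rw [Fin.lt_def, w2, w3, m2, m3]; omega)
          (by rw [Fin.lt_def, w3, m3]; omega) e13 e02.symm
        exact e02.trans h.symm

lemma eq_of_no_bd {γ : Fin n → ℕ} (h : ∀ x : Fin n, γ x = γ (x + 1)) (x y : Fin n) :
    γ x = γ y := by
  have key : ∀ (k : ℕ) (z : Fin n), γ (z + (k : Fin n)) = γ z := by
    intro k
    induction k with
    | zero => simp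
    | succ k ih =>
      intro z
      have e : ((k + 1 : ℕ) : Fin n) = (k : Fin n) + 1 := by push_cast; ring
      rw [e, ← add_assoc, ← h (z + (k : Fin n))]
      exact ih z
  have hx : x + (((y - x : Fin n).val : ℕ) : Fin n) = y := by
    rw [Fin.cast_val_eq_self]; ring
  have := key (y - x : Fin n).val x
  rw [hx] at this
  exact this.symm

lemma card_exit_eq_entry (γ : Fin n → ℕ) (c : ℕ) :
    (univ.filter (fun x : Fin n => γ x = c ∧ γ (x + 1) ≠ c)).card
      = (univ.filter (fun x : Fin n => γ x ≠ c ∧ γ (x + 1) = c)).card := by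
  classical
  have hsum : ∑ x : Fin n, ((if γ x = c then (1 : ℤ) else 0) - (if γ (x + 1) = c then 1 else 0))
      = 0 := by
    rw [Finset.sum_sub_distrib]
    have h : ∑ x : Fin n, (if γ (x + 1) = c then (1 : ℤ) else 0)
        = ∑ x : Fin n, (if γ x = c then (1 : ℤ) else 0) :=
      Equiv.sum_comp (Equiv.addRight (1 : Fin n)) (fun x => if γ x = c then (1 : ℤ) else 0)
    rw [h]; ring
  have hpt : ∀ x : Fin n,
      (if γ x = c then (1 : ℤ) else 0) - (if γ (x + 1) = c then 1 else 0)
        = (if γ x = c ∧ γ (x + 1) ≠ c then (1 : ℤ) else 0)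
          - (if γ x ≠ c ∧ γ (x + 1) = c then 1 else 0) := by
    intro x
    by_cases h : γ x = c <;> by_cases h' : γ (x + 1) = c <;> simp [h, h']
  rw [Finset.sum_congr rfl (fun x _ => hpt x), Finset.sum_sub_distrib,
    Finset.sum_boole, Finset.sum_boole, sub_eq_zero] at hsum
  exact_mod_cast hsum

lemma exists_unique_exit {γ : Fin n → ℕ} (hcf : CF γ) (hκ : 1 < (univ.image γ).card) :
    ∃ t : Fin n, γ (t + 1) ≠ γ t ∧ ∀ y : Fin n, γ y = γ t → γ (y + 1) ≠ γ t → y = t := by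
  classical
  have exL : ∀ x : Fin n, ∃ j : ℕ, 0 < j ∧ γ (x + (j : Fin n)) = γ x := fun x =>
    ⟨n, Nat.pos_of_ne_zero (NeZero.ne n), by simp⟩
  set ℓ : Fin n → ℕ := fun x => Nat.find (exL x) with hℓ
  have hBne : (univ.filter (fun x : Fin n => γ x ≠ γ (x + 1))).Nonempty := by
    by_contra h
    rw [Finset.not_nonempty_iff_eq_empty, Finset.filter_eq_empty_iff] at h
    have hconst : ∀ x : Fin n, γ x = γ (x + 1) := by
      intro x; have := h (mem_univ x); simpa using this
    have hsub : (univ.image γ) ⊆ {γ 0} := by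
      intro y hy
      obtain ⟨x, _, rfl⟩ := Finset.mem_image.mp hy
      simp [eq_of_no_bd hconst x 0]
    have := Finset.card_le_card hsub
    simp at this; omega
  obtain ⟨x₀, hx₀B, hx₀min⟩ := Finset.exists_min_image _ ℓ hBne
  rw [Finset.mem_filter] at hx₀B
  have hx₀ : γ x₀ ≠ γ (x₀ + 1) := hx₀B.2
  set c := γ x₀ with hc
  set L := ℓ x₀ with hLdef
  have hLspec : 0 < L ∧ γ (x₀ + (L : Fin n)) = c := Nat.find_spec (exL x₀)
  have hLmin : ∀ j, 0 < j → j < L → γ (x₀ + (j : Fin n)) ≠ c := fun j hj hjL h =>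
    Nat.find_min (exL x₀) hjL ⟨hj, h⟩
  have hLn : L ≤ n := Nat.find_min' (exL x₀) ⟨Nat.pos_of_ne_zero (NeZero.ne n), by simp⟩
  have hL2 : 2 ≤ L := by
    by_contra h
    have hL1 : L = 1 := by omega
    have h2 := hLspec.2
    rw [hL1] at h2
    simp only [Nat.cast_one] at h2
    exact hx₀ h2.symm
  set a := γ (x₀ + 1) with ha
  have hac : a ≠ c := fun h => hx₀ h.symm
  have claim1 : ∀ k : ℕ, 0 < k → k < n → γ (x₀ + (k : Fin n)) = a → k < L := by
    intro k hk hkn hka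
    by_contra h
    have hkL : L < k := by
      rcases Nat.lt_or_ge L k with h' | h'
      · exact h'
      · have hkLe : k = L := by omega
        rw [hkLe, hLspec.2] at hka
        exact absurd hka.symm hac
    have hfin := hcf x₀ 1 L k one_pos hL2 hkL hkn hLspec.2.symm
      (by rw [Nat.cast_one, hka])
    rw [Nat.cast_one] at hfin
    exact hx₀ hfin
  set P : ℕ → Prop := fun k => γ (x₀ + (k : Fin n)) = a with hP
  have h1P : P 1 := by simp only [P, Nat.cast_one]; rfl
  set K := Nat.findGreatest P (L - 1) with hK
  have hK1 : 1 ≤ K := Nat.le_findGreatest (by omega) h1P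
  have hKL : K ≤ L - 1 := Nat.findGreatest_le _
  have hKa : γ (x₀ + (K : Fin n)) = a := Nat.findGreatest_spec (by omega : 1 ≤ L - 1) h1P
  refine ⟨x₀ + (K : Fin n), ?_, ?_⟩
  · -- γ (t+1) ≠ γ t = a
    rw [hKa]
    have e1 : x₀ + (K : Fin n) + 1 = x₀ + ((K + 1 : ℕ) : Fin n) := by push_cast; ring
    rw [e1]
    by_cases h : K + 1 = L
    · rw [h, hLspec.2]; exact fun h' => hac h'.symm
    · have hng : ¬ P (K + 1) :=
        Nat.findGreatest_is_greatest (by rw [← hK]; omega) (by omega)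
      exact hng
  · intro y hy hy1
    rw [hKa] at hy hy1
    set k := (y - x₀ : Fin n).val with hk
    have hyk : y = x₀ + (k : Fin n) := by rw [hk, Fin.cast_val_eq_self]; ring
    have hk0 : k ≠ 0 := by
      intro h
      have : y = x₀ := by
        rw [hyk, h]; simp
      rw [this] at hy
      exact hac hy.symm
    have hkn : k < n := (y - x₀ : Fin n).isLt
    have hkL : k < L := claim1 k (Nat.pos_of_ne_zero hk0) hkn (by rw [← hyk]; exact hy)
    have hkK : k = K := by
      rcases lt_trichotomy k K with h | h | h
      · exfalso
        have hyB : y ∈ univ.filter (fun x : Fin n => γ x ≠ γ (x + 1)) := by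
          rw [mem_filter]
          exact ⟨mem_univ y, fun h' => hy1 (h' ▸ hy)⟩
        have hmin := hx₀min y hyB
        have hfind : ℓ y ≤ K - k := by
          apply Nat.find_min'
          constructor
          · omega
          · rw [hyk, cast_add_cast]
            have : k + (K - k) = K := by omega
            rw [this, hKa, ← hyk, hy]
        omega
      · exact h
      · exfalso
        have hng : ¬ P k :=
          Nat.findGreatest_is_greatest (by rw [← hK]; omega) (by omega)
        exact hng (show γ (x₀ + (k : Fin n)) = a from hyk ▸ hy)
    rw [hyk, hkK]

lemma walk {γ : Fin n → ℕ} {t : Fin n}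
    (ht : γ (t + 1) ≠ γ t)
    (huniq : ∀ y : Fin n, γ y = γ t → γ (y + 1) ≠ γ t → y = t)
    (p : Fin n) (hp : γ p = γ t) :
    ∃ m : ℕ, 0 < m ∧ γ (p + (m : Fin n)) = γ (t + 1) ∧
      ∀ j : ℕ, 0 < j → j < m → γ (p + (j : Fin n)) = γ t := by
  classical
  have hex : ∃ j : ℕ, 0 < j ∧ γ (p + (j : Fin n)) ≠ γ t := by
    refine ⟨((t + 1) - p : Fin n).val, ?_, ?_⟩
    · have hne : (t + 1 : Fin n) ≠ p := fun h => ht (h ▸ hp)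
      have : ((t + 1) - p : Fin n) ≠ 0 := fun h => hne (by
        have := sub_eq_zero.mp h; exact this)
      have h0 : ((t + 1) - p : Fin n).val ≠ 0 := fun hv => this (Fin.ext hv)
      omega
    · have he : p + ((((t + 1) - p : Fin n).val : ℕ) : Fin n) = t + 1 := by
        rw [Fin.cast_val_eq_self]; ring
      rw [he]; exact ht
  set m := Nat.find hex with hm
  have hspec : 0 < m ∧ γ (p + (m : Fin n)) ≠ γ t := Nat.find_spec hex
  have hint : ∀ j : ℕ, 0 < j → j < m → γ (p + (j : Fin n)) = γ t := by
    intro j hj hjm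
    by_contra h
    exact Nat.find_min hex hjm ⟨hj, h⟩
  have hprev : γ (p + ((m - 1 : ℕ) : Fin n)) = γ t := by
    rcases Nat.eq_or_lt_of_le hspec.1 with h | h
    · have : m - 1 = 0 := by omega
      rw [this]; simpa using hp
    · exact hint (m - 1) (by omega) (by omega)
  have hexit : p + ((m - 1 : ℕ) : Fin n) = t := by
    apply huniq _ hprev
    have e : p + ((m - 1 : ℕ) : Fin n) + 1 = p + (m : Fin n) := by
      have h1 : ((m - 1 : ℕ) : Fin n) = (m : Fin n) - 1 := by
        have : m - 1 + 1 = m := by omega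
        calc ((m - 1 : ℕ) : Fin n) = ((m - 1 : ℕ) : Fin n) + 1 - 1 := by ring
          _ = ((m - 1 + 1 : ℕ) : Fin n) - 1 := by push_cast; ring
          _ = (m : Fin n) - 1 := by rw [this]
      rw [h1]; ring
    rw [e]; exact hspec.2
  refine ⟨m, hspec.1, ?_, hint⟩
  have e : p + (m : Fin n) = t + 1 := by
    have e2 : p + ((m - 1 : ℕ) : Fin n) + 1 = p + (m : Fin n) := by
      have h1 : ((m - 1 : ℕ) : Fin n) = (m : Fin n) - 1 := by
        have h2 : m - 1 + 1 = m := by omega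
        calc ((m - 1 : ℕ) : Fin n) = ((m - 1 : ℕ) : Fin n) + 1 - 1 := by ring
          _ = ((m - 1 + 1 : ℕ) : Fin n) - 1 := by push_cast; ring
          _ = (m : Fin n) - 1 := by rw [h2]
      rw [h1]; ring
    rw [← e2, hexit]
  rw [e]

lemma cf_recolor {γ : Fin n → ℕ} (hcf : CF γ) {t : Fin n}
    (ht : γ (t + 1) ≠ γ t)
    (huniq : ∀ y : Fin n, γ y = γ t → γ (y + 1) ≠ γ t → y = t) :
    CF (fun x => if γ x = γ t then γ (t + 1) else γ x) := by
  classical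
  set c := γ t with hc
  set d := γ (t + 1) with hd
  set γ' : Fin n → ℕ := fun x => if γ x = c then d else γ x with hγ'
  have g'x : ∀ z, γ z ≠ c → γ' z = γ z := fun z h => by simp [γ', h]
  have g'c : ∀ z, γ z = c → γ' z = d := fun z h => by simp [γ', h]
  intro x k₁ k₂ k₃ h1 h12 h23 h3n e02 e13
  by_contra hne
  by_cases c0 : γ x = c <;> by_cases c1 : γ (x + (k₁ : Fin n)) = c <;>
    by_cases c2 : γ (x + (k₂ : Fin n)) = c <;> by_cases c3 : γ (x + (k₃ : Fin n)) = c
  -- TTTT, TTTF, TTFT, TTFF : c0 ∧ c1 adjacent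
  next => exact hne ((g'c x c0).trans (g'c _ c1).symm)
  next => exact hne ((g'c x c0).trans (g'c _ c1).symm)
  next => exact hne ((g'c x c0).trans (g'c _ c1).symm)
  next => exact hne ((g'c x c0).trans (g'c _ c1).symm)
  -- TFTT : c2 ∧ c3
  next =>
    exact hne (by rw [g'c x c0, e13, g'c _ c3])
  -- TFTF : pair c0, c2
  next =>
    have hB : γ (x + (k₁ : Fin n)) = γ (x + (k₃ : Fin n)) := by
      rw [← g'x _ c1, ← g'x _ c3]; exact e13
    have := hcf x k₁ k₂ k₃ h1 h12 h23 h3n (c0.trans c2.symm) hB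
    exact c1 (this ▸ c0)
  -- TFFT : c3 ∧ c0
  next =>
    exact hne (by rw [g'c x c0, e13, g'c _ c3])
  -- TFFF : single c at p0
  next =>
    have hA : γ' x = d := g'c x c0
    have hBne : γ' (x + (k₁ : Fin n)) ≠ d := fun h => hne (hA.trans h.symm)
    obtain ⟨m, hm0, hmd, hint⟩ := walk ht huniq x c0
    have hmk : m < k₁ := by
      rcases lt_trichotomy m k₁ with h | h | h
      · exact h
      · exfalso
        rw [h] at hmd
        exact hBne (by rw [g'x _ c1]; exact hmd)
      · exact absurd (hint k₁ h1 h) c1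
    have hP2 : γ (x + (k₂ : Fin n)) = d := by
      rw [← g'x _ c2, ← e02, hA]
    have hB13 : γ (x + (k₁ : Fin n)) = γ (x + (k₃ : Fin n)) := by
      rw [← g'x _ c1, ← g'x _ c3]; exact e13
    have ea : x + (m : Fin n) + ((k₁ - m : ℕ) : Fin n) = x + (k₁ : Fin n) := by
      rw [cast_add_cast]; congr 2; omega
    have eb : x + (m : Fin n) + ((k₂ - m : ℕ) : Fin n) = x + (k₂ : Fin n) := by
      rw [cast_add_cast]; congr 2; omega
    have ec : x + (m : Fin n) + ((k₃ - m : ℕ) : Fin n) = x + (k₃ : Fin n) := by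
      rw [cast_add_cast]; congr 2; omega
    have := hcf (x + (m : Fin n)) (k₁ - m) (k₂ - m) (k₃ - m)
      (by omega) (by omega) (by omega) (by omega)
      (by rw [eb, hmd, hP2]) (by rw [ea, ec]; exact hB13)
    rw [ea, hmd] at this
    exact hBne (by rw [g'x _ c1]; exact this.symm)
  -- FTTT : c1 ∧ c2
  next =>
    exact hne (by rw [e02, g'c _ c2, g'c _ c1])
  next =>
    exact hne (by rw [e02, g'c _ c2, g'c _ c1])
  -- FTFT : pair c1, c3
  next =>
    have hA : γ x = γ (x + (k₂ : Fin n)) := by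
      rw [← g'x _ c0, ← g'x _ c2]; exact e02
    have := hcf x k₁ k₂ k₃ h1 h12 h23 h3n hA (c1.trans c3.symm)
    exact c0 (this.trans c1)
  -- FTFF : single c at p1
  next =>
    have hB : γ' (x + (k₁ : Fin n)) = d := g'c _ c1
    have hAne : γ' x ≠ d := fun h => hne (h.trans hB.symm)
    have hAγ : γ' x = γ x := g'x _ c0
    obtain ⟨m, hm0, hmd, hint⟩ := walk ht huniq _ c1
    have hmk : m < k₂ - k₁ := by
      rcases lt_trichotomy m (k₂ - k₁) with h | h | h
      · exact h
      · exfalso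
        rw [cast_add_cast] at hmd
        have hmm : k₁ + m = k₂ := by omega
        rw [hmm] at hmd
        exact hAne (by rw [e02, g'x _ c2]; exact hmd)
      · exfalso
        have hj := hint (k₂ - k₁) (by omega) h
        rw [cast_add_cast] at hj
        have hmm : k₁ + (k₂ - k₁) = k₂ := by omega
        rw [hmm] at hj
        exact c2 hj
    have hP3 : γ (x + (k₃ : Fin n)) = d := by
      rw [← g'x _ c3, ← e13, hB]
    rw [cast_add_cast] at hmd
    have := hcf x (k₁ + m) k₂ k₃ (by omega) (by omega) h23 h3n
      (by rw [← g'x _ c0, ← g'x _ c2]; exact e02) (by rw [hmd, hP3])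
    rw [hmd] at this
    exact hAne (by rw [hAγ]; exact this)
  -- FFTT : c2 ∧ c3
  next =>
    exact hne (by rw [e02, g'c _ c2, e13, g'c _ c3])
  -- FFTF : single c at p2
  next =>
    have hA : γ' x = d := by rw [e02]; exact g'c _ c2
    have hAγ : γ x = d := by rw [← g'x _ c0]; exact hA
    have hBne : γ' (x + (k₁ : Fin n)) ≠ d := fun h => hne (hA.trans h.symm)
    obtain ⟨m, hm0, hmd, hint⟩ := walk ht huniq _ c2
    rw [cast_add_cast] at hmd
    have hmk : m < k₃ - k₂ := by
      rcases lt_trichotomy m (k₃ - k₂) with h | h | h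
      · exact h
      · exfalso
        have hmm : k₂ + m = k₃ := by omega
        rw [hmm] at hmd
        exact hBne (e13.trans ((g'x _ c3).trans hmd))
      · have hj := hint (k₃ - k₂) (by omega) h
        rw [cast_add_cast] at hj
        have hmm : k₂ + (k₃ - k₂) = k₃ := by omega
        rw [hmm] at hj
        exact absurd hj c3
    have := hcf x k₁ (k₂ + m) k₃ h1 (by omega) (by omega) h3n
      (by rw [hmd]; exact hAγ) (by rw [← g'x _ c1, ← g'x _ c3]; exact e13)
    exact hBne (by rw [g'x _ c1, ← this]; exact hAγ)
  -- FFFT : single c at p3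
  next =>
    have hB : γ' (x + (k₁ : Fin n)) = d := e13.trans (g'c _ c3)
    have hAne : γ' x ≠ d := fun h => hne (h.trans hB.symm)
    have hP1 : γ (x + (k₁ : Fin n)) = d := by rw [← g'x _ c1]; exact hB
    obtain ⟨m, hm0, hmd, hint⟩ := walk ht huniq _ c3
    rw [cast_add_cast] at hmd
    have hxn : x + ((n : ℕ) : Fin n) = x := by simp
    have hmk : m < n - k₃ := by
      rcases lt_trichotomy m (n - k₃) with h | h | h
      · exact h
      · exfalso
        have hmm : k₃ + m = n := by omega
        rw [hmm, hxn] at hmd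
        exact hAne (by rw [g'x _ c0]; exact hmd)
      · exfalso
        have hj := hint (n - k₃) (by omega) h
        rw [cast_add_cast] at hj
        have hmm : k₃ + (n - k₃) = n := by omega
        rw [hmm, hxn] at hj
        exact c0 hj
    have := hcf x k₁ k₂ (k₃ + m) h1 h12 (by omega) (by omega)
      (by rw [← g'x _ c0, ← g'x _ c2]; exact e02) (by rw [hP1, hmd])
    exact hAne (by rw [g'x _ c0, this]; exact hP1)
  -- FFFF : no c
  next =>
    have hA : γ x = γ (x + (k₂ : Fin n)) := by
      rw [← g'x _ c0, ← g'x _ c2]; exact e02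
    have hB : γ (x + (k₁ : Fin n)) = γ (x + (k₃ : Fin n)) := by
      rw [← g'x _ c1, ← g'x _ c3]; exact e13
    have := hcf x k₁ k₂ k₃ h1 h12 h23 h3n hA hB
    exact hne (by rw [g'x _ c0, g'x _ c1]; exact this)

lemma main_ind : ∀ (κ : ℕ) (γ : Fin n → ℕ), (univ.image γ).card ≤ κ → CF γ →
    (univ.filter (fun x : Fin n => γ x ≠ γ (x + 1))).card ≤ 2 * ((univ.image γ).card - 1) := by
  intro κ
  induction κ with
  | zero =>
    intro γ hcard _
    have hpos : 0 < (univ.image γ).card :=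
      Finset.card_pos.mpr (Finset.univ_nonempty.image γ)
    omega
  | succ κ ih =>
    intro γ hcard hcf
    by_cases h1 : (univ.image γ).card ≤ 1
    · have hB : (univ.filter (fun x : Fin n => γ x ≠ γ (x + 1))) = ∅ := by
        rw [Finset.filter_eq_empty_iff]
        intro x _
        simp only [ne_eq, not_not]
        exact Finset.card_le_one.mp h1 _ (mem_image_of_mem γ (mem_univ x))
          _ (mem_image_of_mem γ (mem_univ _))
      rw [hB]; simp
    · push_neg at h1
      obtain ⟨t, ht, huniq⟩ := exists_unique_exit hcf h1
      set c := γ t with hc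
      set d := γ (t + 1) with hd
      set γ' : Fin n → ℕ := fun x => if γ x = c then d else γ x with hγ'
      have himg : univ.image γ' = (univ.image γ).erase c := by
        ext y
        simp only [Finset.mem_erase, Finset.mem_image, mem_univ, true_and]
        constructor
        · rintro ⟨x, rfl⟩
          by_cases h : γ x = c
          · refine ⟨?_, t + 1, ?_⟩
            · simp only [γ', if_pos h]
              exact fun h' => ht h'
            · simp only [γ', if_pos h]; rfl
          · exact ⟨by simp [γ', h], x, by simp [γ', h]⟩
        · rintro ⟨hyc, x, rfl⟩
          exact ⟨x, by simp [γ', hyc]⟩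
      have hcimg : c ∈ univ.image γ := mem_image_of_mem γ (mem_univ t)
      have hcard' : (univ.image γ').card = (univ.image γ).card - 1 := by
        rw [himg, Finset.card_erase_of_mem hcimg]
      have hcf' : CF γ' := cf_recolor hcf ht huniq
      have hsub : (univ.filter (fun x : Fin n => γ x ≠ γ (x + 1)))
          ⊆ (univ.filter (fun x : Fin n => γ' x ≠ γ' (x + 1))) ∪ {t}
            ∪ (univ.filter (fun x : Fin n => γ x ≠ c ∧ γ (x + 1) = c)) := by
        intro x hx
        rw [mem_filter] at hx
        simp only [Finset.mem_union, Finset.mem_filter, Finset.mem_singleton, mem_univ,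
          true_and]
        by_cases hxc : γ x = c <;> by_cases hx1c : γ (x + 1) = c
        · exact absurd (hxc.trans hx1c.symm) hx.2
        · exact Or.inl (Or.inr (huniq x hxc hx1c))
        · exact Or.inr ⟨hxc, hx1c⟩
        · refine Or.inl (Or.inl ?_)
          simp only [γ', if_neg hxc, if_neg hx1c]
          exact hx.2
      have hentry : (univ.filter (fun x : Fin n => γ x ≠ c ∧ γ (x + 1) = c)).card = 1 := by
        rw [← card_exit_eq_entry γ c]
        have hset : (univ.filter (fun x : Fin n => γ x = c ∧ γ (x + 1) ≠ c)) = {t} := by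
          ext x
          simp only [mem_filter, mem_univ, true_and, Finset.mem_singleton]
          constructor
          · rintro ⟨ha, hb⟩; exact huniq x ha hb
          · rintro rfl; exact ⟨rfl, ht⟩
        rw [hset, Finset.card_singleton]
      have hBle := Finset.card_le_card hsub
      have hu1 := Finset.card_union_le
        ((univ.filter (fun x : Fin n => γ' x ≠ γ' (x + 1))) ∪ {t})
        (univ.filter (fun x : Fin n => γ x ≠ c ∧ γ (x + 1) = c))
      have hu2 := Finset.card_union_le
        (univ.filter (fun x : Fin n => γ' x ≠ γ' (x + 1))) ({t} : Finset (Fin n))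
      have hst : ({t} : Finset (Fin n)).card = 1 := Finset.card_singleton t
      have hih := ih γ' (by omega) hcf'
      omega

/-- A crossing-free coloring of a cyclic word on `n` positions using `κ > 1` colors
induces at most `2(κ − 1)` blocks.  Crossing-free means the pattern `i…j…i…j` with
`i ≠ j` does not occur; the number of blocks (maximal monochromatic cyclic runs) equals
the number of positions `x` with `γ x ≠ γ (x+1)` (cyclically) when more than one color
is used. -/
theorem crossing_free_block_bound (n : ℕ) [NeZero n] (γ : Fin n → ℕ)
    (hκ : 1 < (Finset.univ.image γ).card)
    (hcf : ∀ a b c d : Fin n, a < b → b < c → c < d →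
      γ a = γ c → γ b = γ d → γ a = γ b) :
    (Finset.univ.filter (fun x : Fin n => γ x ≠ γ (x + 1))).card
      ≤ 2 * ((Finset.univ.image γ).card - 1) :=
  main_ind (Finset.univ.image γ).card γ le_rfl (cf_of_hcf hcf)
end
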